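/- Let A be an invertible real n×n matrix with singular values λ₁ ≤ ⋯ ≤ λₙ (all positive). Define H_I(A) = |det A| / λ₁ⁿ, H_O(A) = λₙⁿ / |det A|, and H(A) = λₙ/λ₁. Then H(A) ≤ min{H_I(A), H_O(A)} ≤ H(A)^{n/2} and H(A)^{n/2} ≤ max{H_I(A), H_O(A)} ≤ H(A)^{n-1}. -/

import Mathlib

/-- Inequalities between the linear dilatations `H_I`, `H_O`, `H` of an invertible
real `n×n` matrix `A` with singular values `λ₁ ≤ ⋯ ≤ λₙ`. -/
theorem stmt13 (n : ℕ) (hn : 0 < n) (A : Matrix (Fin n) (Fin n) ℝ)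
    (lam : Fin n → ℝ) (hpos : ∀ i, 0 < lam i) (hmono : Monotone lam)
    (hA : (A * A.transpose).IsHermitian)
    (heig : ∃ σ : Equiv.Perm (Fin n), ∀ i, hA.eigenvalues (σ i) = lam i ^ 2) :
    let l1 := lam ⟨0, hn⟩
    let ln := lam ⟨n - 1, Nat.sub_lt hn one_pos⟩
    let HI := |A.det| / l1 ^ n
    let HO := ln ^ n / |A.det|
    let H := ln / l1
    (H ≤ min HI HO ∧ min HI HO ≤ H ^ ((n : ℝ) / 2)) ∧
    (H ^ ((n : ℝ) / 2) ≤ max HI HO ∧ max HI HO ≤ H ^ (n - 1)) := by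
  obtain ⟨m, rfl⟩ : ∃ m, n = m + 1 := ⟨n - 1, (Nat.succ_pred_eq_of_pos hn).symm⟩
  intro l1 ln HI HO H
  obtain ⟨σ, hσ⟩ := heig
  set P : ℝ := ∏ i, lam i with hP
  have hPpos : 0 < P := Finset.prod_pos (fun i _ => hpos i)
  have hl1 : 0 < l1 := hpos _
  have hln : 0 < ln := hpos _
  have hle : l1 ≤ ln := hmono (by simp [Fin.le_def])
  -- |det A| = P
  have hdet : |A.det| = P := by
    have h1 : (A * A.transpose).det = A.det ^ 2 := by
      rw [Matrix.det_mul, Matrix.det_transpose, sq]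
    have h2 : (A * A.transpose).det = ∏ i, (hA.eigenvalues i : ℝ) :=
      hA.det_eq_prod_eigenvalues
    have h3 : (∏ i, (hA.eigenvalues i : ℝ)) = P ^ 2 := by
      rw [← Equiv.prod_comp σ (fun i => (hA.eigenvalues i : ℝ))]
      simp_rw [hσ]
      rw [hP, ← Finset.prod_pow]
    have h4 : A.det ^ 2 = P ^ 2 := by rw [← h1, h2, h3]
    calc |A.det| = Real.sqrt (A.det ^ 2) := (Real.sqrt_sq_eq_abs _).symm
      _ = Real.sqrt (P ^ 2) := by rw [h4]
      _ = P := Real.sqrt_sq hPpos.le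
  -- bounds on P
  have hlow : ∀ i, l1 ≤ lam i := fun i => hmono (by simp [Fin.le_def])
  have hhigh : ∀ i, lam i ≤ ln := fun i =>
    hmono (by simp [Fin.le_def]; exact Nat.lt_succ_iff.mp i.isLt)
  have key : ∀ (k : Fin (m + 1)) (c : ℝ), 0 < c → (∀ i, c ≤ lam i) →
      lam k * c ^ m ≤ P := by
    intro k c hc hcl
    rw [hP, ← Finset.mul_prod_erase Finset.univ lam (Finset.mem_univ k)]
    refine mul_le_mul_of_nonneg_left ?_ (hpos k).le
    calc c ^ m = ∏ _i ∈ Finset.univ.erase k, c := by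
          rw [Finset.prod_const, Finset.card_erase_of_mem (Finset.mem_univ k)]
          simp
      _ ≤ _ := Finset.prod_le_prod (fun i _ => hc.le) (fun i _ => hcl i)
  have key' : ∀ (k : Fin (m + 1)) (c : ℝ), 0 < c → (∀ i, lam i ≤ c) →
      P ≤ lam k * c ^ m := by
    intro k c hc hcl
    rw [hP, ← Finset.mul_prod_erase Finset.univ lam (Finset.mem_univ k)]
    refine mul_le_mul_of_nonneg_left ?_ (hpos k).le
    calc ∏ i ∈ Finset.univ.erase k, lam i
        ≤ ∏ _i ∈ Finset.univ.erase k, c :=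
          Finset.prod_le_prod (fun i _ => (hpos i).le) (fun i _ => hcl i)
      _ = c ^ m := by
          rw [Finset.prod_const, Finset.card_erase_of_mem (Finset.mem_univ k)]
          simp
  have bound1 : ln * l1 ^ m ≤ P := key ⟨m, by omega⟩ l1 hl1 hlow
  have bound2 : P ≤ l1 * ln ^ m := key' ⟨0, by omega⟩ ln hln hhigh
  have hHIval : HI = P / l1 ^ (m + 1) := by rw [show HI = |A.det| / l1 ^ (m+1) from rfl, hdet]
  have hHOval : HO = ln ^ (m + 1) / P := by rw [show HO = ln ^ (m+1) / |A.det| from rfl, hdet]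
  have hHIpos : 0 < HI := by rw [hHIval]; positivity
  have hHOpos : 0 < HO := by rw [hHOval]; positivity
  have hHpos : 0 < H := div_pos hln hl1
  -- basic inequalities
  have hHHI : H ≤ HI := by
    rw [hHIval, div_le_div_iff₀ hl1 (pow_pos hl1 _)]
    calc ln * l1 ^ (m + 1) = (ln * l1 ^ m) * l1 := by ring
      _ ≤ P * l1 := mul_le_mul_of_nonneg_right bound1 hl1.le
  have hHHO : H ≤ HO := by
    rw [hHOval, div_le_div_iff₀ hl1 hPpos]
    calc ln * P ≤ ln * (l1 * ln ^ m) := mul_le_mul_of_nonneg_left bound2 hln.le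
      _ = ln ^ (m + 1) * l1 := by ring
  have hHIm : HI ≤ H ^ m := by
    rw [hHIval, show H ^ m = ln ^ m / l1 ^ m from div_pow ln l1 m,
      div_le_div_iff₀ (pow_pos hl1 _) (pow_pos hl1 _)]
    calc P * l1 ^ m ≤ (l1 * ln ^ m) * l1 ^ m :=
          mul_le_mul_of_nonneg_right bound2 (pow_pos hl1 _).le
      _ = ln ^ m * l1 ^ (m + 1) := by ring
  have hHOm : HO ≤ H ^ m := by
    rw [hHOval, show H ^ m = ln ^ m / l1 ^ m from div_pow ln l1 m,
      div_le_div_iff₀ hPpos (pow_pos hl1 _)]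
    calc ln ^ (m + 1) * l1 ^ m = (ln * l1 ^ m) * ln ^ m := by ring
      _ ≤ P * ln ^ m := mul_le_mul_of_nonneg_right bound1 (pow_pos hln _).le
      _ = ln ^ m * P := mul_comm _ _
  have hprod : HI * HO = H ^ (m + 1) := by
    rw [hHIval, hHOval, show H ^ (m+1) = ln ^ (m+1) / l1 ^ (m+1) from div_pow ln l1 (m+1)]
    field_simp
  -- rpow identity
  have hrpow : H ^ (((m + 1 : ℕ) : ℝ) / 2) = Real.sqrt (H ^ (m + 1)) := by
    rw [Real.sqrt_eq_rpow, ← Real.rpow_natCast H (m + 1), ← Real.rpow_mul hHpos.le]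
    norm_num
    rw [mul_one_div]
  have hminmax : min HI HO * max HI HO = H ^ (m + 1) := by
    rw [min_mul_max, hprod]
  constructor
  · refine ⟨le_min hHHI hHHO, ?_⟩
    rw [hrpow]
    have h1 : min HI HO ^ 2 ≤ H ^ (m + 1) := by
      rw [← hminmax, sq]
      exact mul_le_mul_of_nonneg_left (min_le_max) (le_min hHIpos.le hHOpos.le)
    exact (Real.le_sqrt (le_min hHIpos.le hHOpos.le) (by positivity)).mpr h1
  · constructor
    · rw [hrpow]
      have h1 : H ^ (m + 1) ≤ max HI HO ^ 2 := by
        rw [← hminmax, sq]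
        exact mul_le_mul_of_nonneg_right (min_le_max) (le_max_of_le_left hHIpos.le)
      calc Real.sqrt (H ^ (m + 1)) ≤ Real.sqrt (max HI HO ^ 2) := Real.sqrt_le_sqrt h1
        _ = max HI HO := Real.sqrt_sq (le_max_of_le_left hHIpos.le)
    · exact max_le hHIm hHOm
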